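/- Let Σ be a finite alphabet and f : Σ → ℤ a function with f(a) ≥ −1 for all a ∈ Σ. Let w = w₁⋯w_n be an f-valid word of length n, write b(i) = Σ_{j=1}^{i} f(w_j) for 1 ≤ i ≤ n, and fix ℓ ∈ {1,…,n}. Then the cyclic rotation w' = w_{ℓ+1}⋯w_n w₁⋯w_ℓ is an f-Lukasiewicz word if and only if b(i) ≥ b(ℓ) for all i ∈ {ℓ+1,…,n} and b(i) > b(ℓ) for all i ∈ {1,…,ℓ−1}. -/

import Mathlib

/-- A word `w` over an alphabet `α` is `f`-valid if the sum of `f` over its letters is `-1`. -/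
def IsFValid {α : Type*} (f : α → ℤ) (w : List α) : Prop :=
  (w.map f).sum = -1

/-- A word `w` is an `f`-Lukasiewicz word if it is `f`-valid and every proper prefix sum
(of length `i` with `1 ≤ i < n`) is nonnegative. -/
def IsLukasiewicz {α : Type*} (f : α → ℤ) (w : List α) : Prop :=
  IsFValid f w ∧ ∀ i : ℕ, 1 ≤ i → i < w.length → 0 ≤ ((w.take i).map f).sum

/-- Let `w` be an `f`-valid word of length `n` (with `f ≥ -1` on a finite
alphabet), `b i = f w₁ + ⋯ + f wᵢ`, and fix `ℓ ∈ {1,…,n}`.  The cyclic rotation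
`w_{ℓ+1}⋯w_n w_1⋯w_ℓ` is an `f`-Lukasiewicz word iff `b i ≥ b ℓ` for all
`i ∈ {ℓ+1,…,n}` and `b i > b ℓ` for all `i ∈ {1,…,ℓ-1}`. -/
theorem rotation_is_lukasiewicz_iff
    {α : Type*} [Fintype α] (f : α → ℤ) (hf : ∀ x : α, -1 ≤ f x)
    (w : List α) (n : ℕ) (hn : n = w.length)
    (hw : IsFValid f w)
    (b : ℕ → ℤ) (hb : ∀ i : ℕ, b i = ((w.take i).map f).sum)
    (ℓ : ℕ) (hℓ1 : 1 ≤ ℓ) (hℓn : ℓ ≤ n) :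
    IsLukasiewicz f (w.drop ℓ ++ w.take ℓ) ↔
      (∀ i : ℕ, ℓ + 1 ≤ i → i ≤ n → b ℓ ≤ b i) ∧
      (∀ i : ℕ, 1 ≤ i → i ≤ ℓ - 1 → b ℓ < b i) := by
  have hlen : (w.drop ℓ).length = n - ℓ := by simp [hn]
  have hrotlen : (w.drop ℓ ++ w.take ℓ).length = n := by
    simp [hn]; omega
  have hsplit : b ℓ + ((w.drop ℓ).map f).sum = -1 := by
    have := List.take_append_drop ℓ w
    have h2 : ((w.take ℓ ++ w.drop ℓ).map f).sum = -1 := by rw [this]; exact hw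
    rw [List.map_append, List.sum_append] at h2
    rw [hb]; linarith
  have key1 : ∀ i : ℕ, i ≤ n - ℓ →
      (((w.drop ℓ ++ w.take ℓ).take i).map f).sum = b (ℓ + i) - b ℓ := by
    intro i hi
    have h1 : (w.drop ℓ ++ w.take ℓ).take i = (w.drop ℓ).take i := by
      rw [List.take_append_of_le_length (by omega)]
    rw [h1, hb, hb, List.take_add, List.map_append, List.sum_append]
    ring
  have key2 : ∀ j : ℕ, j ≤ ℓ →
      (((w.drop ℓ ++ w.take ℓ).take (n - ℓ + j)).map f).sum = b j - b ℓ - 1 := by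
    intro j hj
    have h1 : (w.drop ℓ ++ w.take ℓ).take (n - ℓ + j)
        = w.drop ℓ ++ (w.take ℓ).take j := by
      rw [← hlen, List.take_length_add_append]
    have h2 : (w.take ℓ).take j = w.take j := by
      rw [List.take_take, min_eq_left hj]
    rw [h1, h2, List.map_append, List.sum_append, hb]
    linarith
  have hvalid : IsFValid f (w.drop ℓ ++ w.take ℓ) := by
    unfold IsFValid
    rw [List.map_append, List.sum_append]
    rw [hb] at hsplit
    linarith
  constructor
  · rintro ⟨_, hpref⟩
    constructor
    · intro i hi1 hi2
      have hk : 1 ≤ i - ℓ ∧ i - ℓ ≤ n - ℓ ∧ i - ℓ < n ∧ ℓ + (i - ℓ) = i := by omega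
      have := hpref (i - ℓ) hk.1 (by rw [hrotlen]; exact hk.2.2.1)
      rw [key1 (i - ℓ) hk.2.1, hk.2.2.2] at this
      linarith
    · intro j hj1 hj2
      have := hpref (n - ℓ + j) (by omega) (by rw [hrotlen]; omega)
      rw [key2 j (by omega)] at this
      linarith
  · rintro ⟨h1, h2⟩
    refine ⟨hvalid, ?_⟩
    intro i hi1 hi2
    rw [hrotlen] at hi2
    by_cases hc : i ≤ n - ℓ
    · rw [key1 i hc]
      have := h1 (ℓ + i) (by omega) (by omega)
      linarith
    · have hj : i = n - ℓ + (i - (n - ℓ)) := by omega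
      rw [hj, key2 (i - (n - ℓ)) (by omega)]
      have := h2 (i - (n - ℓ)) (by omega) (by omega)
      linarith
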